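/- Ewens consistency via exponential difference: with Δ = Λ ∪ {v}, v ∉ Λ, and P_Λ, P_Δ the Ewens distributions, for any σ : Δ → ℤ one has P_Δ(σ)/P_Λ(σ_Λ) = (Z_{|Λ|}(θ)/Z_{|Δ|}(θ)) · exp(H_Δ(σ) − H_Λ(σ_Λ)), i.e. the ratio P_Δ(σ)/P_Λ(σ_Λ) equals ((|Λ|+1)/(|Λ|+θ)) · r where r = θ/(b_1(σ_Λ)+1) if σ(v) is a new value, and r = i₀ b_{i₀}(σ_Λ)/((i₀+1)(b_{i₀+1}(σ_Λ)+1)) if σ(v) has multiplicity i₀ ≥ 1 in σ_Λ. -/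

import Mathlib

open Finset

/-- `b_j(σ)`: the number of integer values attained by `σ` exactly `j` times on `Λ`. -/
def bcount {V : Type*} [DecidableEq V] (Λ : Finset V) (σ : V → ℤ) (j : ℕ) : ℕ :=
  ((Λ.image σ).filter fun z => (Λ.filter fun x => σ x = z).card = j).card

/-- The Ewens Hamiltonian `H_Λ(σ) = ∑_{j=1}^{|Λ|} [b_j(σ) ln(θ/j) − ln(b_j(σ)!)]`. -/
noncomputable def ham {V : Type*} [DecidableEq V] (θ : ℝ) (Λ : Finset V) (σ : V → ℤ) : ℝ :=
  ∑ j ∈ Finset.Icc 1 Λ.card,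
    ((bcount Λ σ j : ℝ) * Real.log (θ / j) - Real.log (bcount Λ σ j).factorial)

/-- The Ewens normalizing constant `Z_n(θ) = θ(θ+1)⋯(θ+n−1)/n!`. -/
noncomputable def Zc (n : ℕ) (θ : ℝ) : ℝ :=
  (∏ k ∈ Finset.range n, (θ + k)) / n.factorial

/-- The Ewens probability `P_Λ(σ) = (1/Z_{|Λ|}(θ)) ∏_{j=1}^{|Λ|} (θ/j)^{b_j(σ)}/b_j(σ)!`. -/
noncomputable def Pmeas {V : Type*} [DecidableEq V] (θ : ℝ) (Λ : Finset V) (σ : V → ℤ) : ℝ :=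
  (1 / Zc Λ.card θ) * ∏ j ∈ Finset.Icc 1 Λ.card,
    (θ / j) ^ (bcount Λ σ j) / (bcount Λ σ j).factorial

lemma bcount_zero_of_gt {V : Type*} [DecidableEq V] (Λ : Finset V) (σ : V → ℤ) {j : ℕ}
    (hj : Λ.card < j) : bcount Λ σ j = 0 := by
  rw [bcount, Finset.card_eq_zero, Finset.filter_eq_empty_iff]
  intro z _ h
  exact absurd (h ▸ Finset.card_filter_le Λ _) (by omega)

lemma bcount_insert {V : Type*} [DecidableEq V] (Λ : Finset V) (v : V) (hv : v ∉ Λ)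
    (σ : V → ℤ) (j : ℕ) (hj : 1 ≤ j) :
    bcount (insert v Λ) σ j + (if j = (Λ.filter fun x => σ x = σ v).card then 1 else 0)
      = bcount Λ σ j
        + (if j = (Λ.filter fun x => σ x = σ v).card + 1 then 1 else 0) := by
  classical
  set m := (Λ.filter fun x => σ x = σ v).card with hm
  have hc : ∀ z, ((insert v Λ).filter fun x => σ x = z).card
      = (Λ.filter fun x => σ x = z).card + (if σ v = z then 1 else 0) := by
    intro z
    rw [Finset.filter_insert]
    split
    · rw [Finset.card_insert_of_notMem (fun h => hv (Finset.mem_of_mem_filter _ h))]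
    · simp
  have hA : ((insert v Λ).image σ).filter
        (fun z => ((insert v Λ).filter fun x => σ x = z).card = j)
      = (if m + 1 = j then {σ v} else ∅)
        ∪ ((Λ.image σ).filter
            (fun z => (Λ.filter fun x => σ x = z).card = j)).erase (σ v) := by
    ext z
    simp only [Finset.image_insert, Finset.mem_filter, Finset.mem_insert, hc,
      Finset.mem_union, Finset.mem_erase]
    by_cases hz : z = σ v
    · subst hz
      by_cases hmj : m + 1 = j <;> simp [← hm, hmj]
    · have hz' : ¬ σ v = z := fun h => hz h.symm
      by_cases hmj : m + 1 = j <;> simp [hmj, hz, hz']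
  have hmemA : σ v ∈ (Λ.image σ).filter
      (fun z => (Λ.filter fun x => σ x = z).card = j) ↔ m = j := by
    simp only [Finset.mem_filter]
    constructor
    · rintro ⟨-, h⟩; rw [hm]; exact h
    · intro h
      have hm1 : 1 ≤ (Λ.filter fun x => σ x = σ v).card := by omega
      obtain ⟨x, hx⟩ := Finset.card_pos.mp hm1
      rw [Finset.mem_filter] at hx
      exact ⟨Finset.mem_image.mpr ⟨x, hx.1, hx.2⟩, by rw [← hm]; exact h⟩
  have hdisj : Disjoint (if m + 1 = j then ({σ v} : Finset ℤ) else ∅)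
      (((Λ.image σ).filter
          (fun z => (Λ.filter fun x => σ x = z).card = j)).erase (σ v)) := by
    split
    · exact Finset.disjoint_singleton_left.mpr (Finset.notMem_erase _ _)
    · exact Finset.disjoint_empty_left _
  have hcard : bcount (insert v Λ) σ j = (if m + 1 = j then 1 else 0)
      + (((Λ.image σ).filter
          (fun z => (Λ.filter fun x => σ x = z).card = j)).erase (σ v)).card := by
    rw [bcount, hA, Finset.card_union_of_disjoint hdisj]
    congr 1
    split <;> simp
  by_cases hjm : j = m
  · have hmem := hmemA.mpr hjm.symm
    have h1 := Finset.card_erase_add_one hmem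
    rw [hcard, bcount, if_pos hjm, if_neg (by omega), if_neg (by omega)]
    omega
  · rw [hcard, Finset.erase_eq_of_notMem (fun h => hjm (hmemA.mp h).symm),
      if_neg hjm, bcount]
    by_cases hjm1 : j = m + 1
    · rw [if_pos (by omega), if_pos hjm1]; omega
    · rw [if_neg (by omega), if_neg hjm1]; omega

lemma Zc_pos (n : ℕ) {θ : ℝ} (hθ : 0 < θ) : 0 < Zc n θ := by
  refine div_pos (Finset.prod_pos fun k _ => by positivity) (by positivity)

lemma Zc_ratio {θ : ℝ} (hθ : 0 < θ) (n : ℕ) :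
    Zc n θ / Zc (n + 1) θ = (n + 1) / (θ + n) := by
  have hP : (0:ℝ) < ∏ k ∈ Finset.range n, (θ + k) :=
    Finset.prod_pos fun k _ => by positivity
  have h1 : (0:ℝ) < θ + n := by positivity
  have h2 : (0:ℝ) < (n.factorial : ℝ) := by positivity
  rw [Zc, Zc, Finset.prod_range_succ, Nat.factorial_succ]
  push_cast
  field_simp

lemma exp_ham {V : Type*} [DecidableEq V] {θ : ℝ} (hθ : 0 < θ) (Λ : Finset V) (σ : V → ℤ) :
    Real.exp (ham θ Λ σ)
      = ∏ j ∈ Finset.Icc 1 Λ.card,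
          (θ / j) ^ (bcount Λ σ j) / (bcount Λ σ j).factorial := by
  rw [ham, Real.exp_sum]
  refine Finset.prod_congr rfl fun j hj => ?_
  have hj1 : (0:ℝ) < j := by
    exact_mod_cast Nat.lt_of_lt_of_le Nat.zero_lt_one (Finset.mem_Icc.mp hj).1
  have hx : (0:ℝ) < θ / j := div_pos hθ hj1
  have hf : (0:ℝ) < ((bcount Λ σ j).factorial : ℝ) := by positivity
  rw [Real.exp_sub, Real.exp_log hf, ← Real.log_pow, Real.exp_log (pow_pos hx _)]

set_option maxHeartbeats 1000000 in
/-- Ewens consistency via exponential difference: for `Δ = Λ ∪ {v}`,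
`P_Δ(σ)/P_Λ(σ_Λ) = (Z_{|Λ|}(θ)/Z_{|Δ|}(θ))·exp(H_Δ(σ) − H_Λ(σ_Λ))`, and the ratio equals
`((|Λ|+1)/(|Λ|+θ))·r` with `r = θ/(b_1(σ_Λ)+1)` for a new value and
`r = i₀ b_{i₀}(σ_Λ)/((i₀+1)(b_{i₀+1}(σ_Λ)+1))` for an existing value of multiplicity
`i₀ ≥ 1`. -/
theorem ewens_ratio {V : Type*} [DecidableEq V] (θ : ℝ) (hθ : 0 < θ)
    (Λ : Finset V) (v : V) (hv : v ∉ Λ) (σ : V → ℤ) (hP : 0 < Pmeas θ Λ σ) :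
    Pmeas θ (insert v Λ) σ / Pmeas θ Λ σ =
      (Zc Λ.card θ / Zc (insert v Λ).card θ) *
        Real.exp (ham θ (insert v Λ) σ - ham θ Λ σ) ∧
    ((∀ x ∈ Λ, σ x ≠ σ v) →
      Pmeas θ (insert v Λ) σ / Pmeas θ Λ σ =
        ((Λ.card + 1) / (Λ.card + θ)) * (θ / (bcount Λ σ 1 + 1))) ∧
    (∀ i₀ : ℕ, 1 ≤ i₀ → i₀ = (Λ.filter fun x => σ x = σ v).card →
      Pmeas θ (insert v Λ) σ / Pmeas θ Λ σ =
        ((Λ.card + 1) / (Λ.card + θ)) *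
          ((i₀ * bcount Λ σ i₀ : ℝ) / ((i₀ + 1) * (bcount Λ σ (i₀ + 1) + 1)))) := by
  classical
  have hΔ : (insert v Λ).card = Λ.card + 1 := Finset.card_insert_of_notMem hv
  have hFpos : ∀ (Λ' : Finset V) (j : ℕ), 1 ≤ j →
      (0:ℝ) < (θ / j) ^ (bcount Λ' σ j) / (bcount Λ' σ j).factorial := by
    intro Λ' j hj
    have : (0:ℝ) < j := by exact_mod_cast Nat.lt_of_lt_of_le Nat.zero_lt_one hj
    positivity
  have hQpos : 0 < ∏ j ∈ Finset.Icc 1 Λ.card,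
      (θ / j) ^ (bcount Λ σ j) / ((bcount Λ σ j).factorial : ℝ) :=
    Finset.prod_pos fun j hj => hFpos Λ j (Finset.mem_Icc.mp hj).1
  have hQ'pos : 0 < ∏ j ∈ Finset.Icc 1 (Λ.card + 1),
      (θ / j) ^ (bcount (insert v Λ) σ j) / ((bcount (insert v Λ) σ j).factorial : ℝ) :=
    Finset.prod_pos fun j hj => hFpos _ j (Finset.mem_Icc.mp hj).1
  have hZn : 0 < Zc Λ.card θ := Zc_pos _ hθ
  have hZn1 : 0 < Zc (Λ.card + 1) θ := Zc_pos _ hθ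
  have hbn1 : bcount Λ σ (Λ.card + 1) = 0 := bcount_zero_of_gt Λ σ (by omega)
  have hQext : ∏ j ∈ Finset.Icc 1 (Λ.card + 1),
        (θ / j) ^ (bcount Λ σ j) / ((bcount Λ σ j).factorial : ℝ)
      = ∏ j ∈ Finset.Icc 1 Λ.card,
          (θ / j) ^ (bcount Λ σ j) / ((bcount Λ σ j).factorial : ℝ) := by
    rw [Finset.prod_Icc_succ_top (by omega : 1 ≤ Λ.card + 1), hbn1]
    norm_num
  have hratio1 : Pmeas θ (insert v Λ) σ / Pmeas θ Λ σ
      = (Zc Λ.card θ / Zc (Λ.card + 1) θ)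
        * ((∏ j ∈ Finset.Icc 1 (Λ.card + 1),
              (θ / j) ^ (bcount (insert v Λ) σ j) / ((bcount (insert v Λ) σ j).factorial : ℝ))
            / (∏ j ∈ Finset.Icc 1 Λ.card,
              (θ / j) ^ (bcount Λ σ j) / ((bcount Λ σ j).factorial : ℝ))) := by
    rw [Pmeas, Pmeas, hΔ]
    field_simp
  have hratio2 : Pmeas θ (insert v Λ) σ / Pmeas θ Λ σ
      = ((Λ.card + 1 : ℝ) / (θ + Λ.card))
        * ∏ j ∈ Finset.Icc 1 (Λ.card + 1),
            ((θ / j) ^ (bcount (insert v Λ) σ j) / ((bcount (insert v Λ) σ j).factorial : ℝ)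
              / ((θ / j) ^ (bcount Λ σ j) / ((bcount Λ σ j).factorial : ℝ))) := by
    rw [hratio1, Zc_ratio hθ, ← hQext, ← Finset.prod_div_distrib]
  refine ⟨?_, ?_, ?_⟩
  · rw [hratio1, Real.exp_sub, exp_ham hθ, exp_ham hθ, hΔ]
  · intro hnew
    have hm0 : (Λ.filter fun x => σ x = σ v).card = 0 := by
      rw [Finset.card_eq_zero, Finset.filter_eq_empty_iff]
      exact fun x hx => hnew x hx
    have hb : ∀ j, 1 ≤ j → j ≠ 1 → bcount (insert v Λ) σ j = bcount Λ σ j := by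
      intro j hj hj1
      have h := bcount_insert Λ v hv σ j hj
      rw [hm0, if_neg (by omega), if_neg (by omega)] at h
      omega
    have hb1 : bcount (insert v Λ) σ 1 = bcount Λ σ 1 + 1 := by
      have h := bcount_insert Λ v hv σ 1 le_rfl
      rw [hm0, if_neg (by omega), if_pos (by omega)] at h
      omega
    have hprod : ∏ j ∈ Finset.Icc 1 (Λ.card + 1),
          ((θ / j) ^ (bcount (insert v Λ) σ j) / ((bcount (insert v Λ) σ j).factorial : ℝ)
            / ((θ / j) ^ (bcount Λ σ j) / ((bcount Λ σ j).factorial : ℝ)))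
        = θ / (bcount Λ σ 1 + 1) := by
      rw [Finset.prod_eq_single_of_mem 1 (Finset.mem_Icc.mpr ⟨le_rfl, by omega⟩)
        (fun j hjm hj1 => by
          rw [hb j (Finset.mem_Icc.mp hjm).1 hj1]
          exact div_self (ne_of_gt (hFpos Λ j (Finset.mem_Icc.mp hjm).1)))]
      rw [hb1]
      have hfp : (0:ℝ) < ((bcount Λ σ 1).factorial : ℝ) := by positivity
      have hbp : (0:ℝ) < ((bcount Λ σ 1 : ℝ) + 1) := by positivity
      rw [pow_succ, Nat.factorial_succ]
      push_cast
      field_simp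
    rw [hratio2, hprod]
    ring
  · intro i₀ hi1 hi
    have hmle : (Λ.filter fun x => σ x = σ v).card ≤ Λ.card := Finset.card_filter_le _ _
    have hiC : i₀ ≤ Λ.card := by omega
    have hbm : bcount (insert v Λ) σ i₀ + 1 = bcount Λ σ i₀ := by
      have h := bcount_insert Λ v hv σ i₀ hi1
      rw [← hi, if_pos rfl, if_neg (by omega)] at h
      omega
    have hbm1 : bcount (insert v Λ) σ (i₀ + 1) = bcount Λ σ (i₀ + 1) + 1 := by
      have h := bcount_insert Λ v hv σ (i₀ + 1) (by omega)
      rw [← hi, if_neg (by omega), if_pos rfl] at h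
      omega
    have hbo : ∀ j, 1 ≤ j → j ≠ i₀ → j ≠ i₀ + 1 → bcount (insert v Λ) σ j = bcount Λ σ j := by
      intro j hj h1 h2
      have h := bcount_insert Λ v hv σ j hj
      rw [← hi, if_neg h1, if_neg h2] at h
      omega
    have hmem1 : i₀ ∈ Finset.Icc 1 (Λ.card + 1) := Finset.mem_Icc.mpr ⟨hi1, by omega⟩
    have hmem2 : i₀ + 1 ∈ (Finset.Icc 1 (Λ.card + 1)).erase i₀ :=
      Finset.mem_erase.mpr ⟨by omega, Finset.mem_Icc.mpr ⟨by omega, by omega⟩⟩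
    have hone : ∀ j ∈ ((Finset.Icc 1 (Λ.card + 1)).erase i₀).erase (i₀ + 1),
        (θ / j) ^ (bcount (insert v Λ) σ j) / ((bcount (insert v Λ) σ j).factorial : ℝ)
          / ((θ / j) ^ (bcount Λ σ j) / ((bcount Λ σ j).factorial : ℝ)) = 1 := by
      intro j hj
      rw [Finset.mem_erase, Finset.mem_erase, Finset.mem_Icc] at hj
      rw [hbo j hj.2.2.1 hj.2.1 hj.1]
      exact div_self (ne_of_gt (hFpos Λ j hj.2.2.1))
    rw [hratio2, ← Finset.mul_prod_erase _ _ hmem1, ← Finset.mul_prod_erase _ _ hmem2,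
      Finset.prod_eq_one hone, ← hbm, hbm1]
    have hi0 : (0:ℝ) < (i₀ : ℝ) := by exact_mod_cast Nat.lt_of_lt_of_le Nat.zero_lt_one hi1
    have hi01 : (0:ℝ) < (i₀ : ℝ) + 1 := by positivity
    have ha : (0:ℝ) < ((bcount (insert v Λ) σ i₀).factorial : ℝ) := by positivity
    have ha1 : (0:ℝ) < ((bcount (insert v Λ) σ i₀ : ℝ) + 1) := by positivity
    have hb : (0:ℝ) < ((bcount Λ σ (i₀ + 1)).factorial : ℝ) := by positivity
    have hb1 : (0:ℝ) < ((bcount Λ σ (i₀ + 1) : ℝ) + 1) := by positivity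
    have hθn : (0:ℝ) < θ + Λ.card := by positivity
    have hp1 : (0:ℝ) < (θ / (i₀:ℝ)) ^ (bcount (insert v Λ) σ i₀) := pow_pos (div_pos hθ hi0) _
    have hp2 : (0:ℝ) < (θ / ((i₀:ℝ) + 1)) ^ (bcount Λ σ (i₀ + 1)) := pow_pos (div_pos hθ hi01) _
    rw [pow_succ, pow_succ, Nat.factorial_succ, Nat.factorial_succ]
    push_cast
    field_simp [hθ.ne', hi0.ne', hi01.ne', ha.ne', ha1.ne', hb.ne', hb1.ne', hθn.ne',
      hp1.ne', hp2.ne']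
    ring
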